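/- There exists no pair of vectors u, v in g₂ such that [u,v] in the Lie algebra g₂ equals a₁·c-component plus a₂·b-component matching both brackets simultaneously; concretely: there are no real numbers k₁,…,k₅, l₁,…,l₅ satisfying k₁l₂-k₂l₁ = k₁l₃-k₃l₁ = k₁l₅-k₅l₁ = k₂l₃-k₃l₂ = k₂l₄-k₄l₂ = k₃l₄-k₄l₃ = k₃l₅-k₅l₃ = k₄l₅-k₅l₄ = 0 and k₁l₄-k₄l₁ = k₂l₅-k₅l₂ = 1. -/
import Mathlib


/-- there are no reals `k₁,…,k₅, l₁,…,l₅` such that all the listed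
2×2 minors vanish while `k₁l₄ - k₄l₁ = k₂l₅ - k₅l₂ = 1`. -/
theorem stmt4 :
    ¬ ∃ k1 k2 k3 k4 k5 l1 l2 l3 l4 l5 : ℝ,
        k1 * l2 - k2 * l1 = 0 ∧
        k1 * l3 - k3 * l1 = 0 ∧
        k1 * l5 - k5 * l1 = 0 ∧
        k2 * l3 - k3 * l2 = 0 ∧
        k2 * l4 - k4 * l2 = 0 ∧
        k3 * l4 - k4 * l3 = 0 ∧
        k3 * l5 - k5 * l3 = 0 ∧
        k4 * l5 - k5 * l4 = 0 ∧
        k1 * l4 - k4 * l1 = 1 ∧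
        k2 * l5 - k5 * l2 = 1 := by
  rintro ⟨k1, k2, k3, k4, k5, l1, l2, l3, l4, l5,
    h1, h2, h3, h4, h5, h6, h7, h8, h9, h10⟩
  have : (1 : ℝ) = 0 := by
    linear_combination (k4*l5 - k5*l4) * h1 + (k2*l4 - k4*l2) * h3
      - (k2*l5 - k5*l2) * h9 - h10
  exact one_ne_zero this
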